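/- Let 𝓜 be a model such that (1) for every (F,Q) ∈ 𝓜 the number of columns K(F) of F satisfies K(F) < M, and (2) for every (F,Q) ∈ 𝓜 and every F' ∈ 𝓕_{K(F)}^an, the pair (F',Q) belongs to 𝓜. Then 𝓜 is identifiable if and only if both of the following hold: (a) for all (F¹,Q¹),(F²,Q²) ∈ 𝓜 with F¹Q¹ = F²Q², cone(Q¹) = cone(Q²); and (b) for every (F,Q) ∈ 𝓜, the rows of Q are linearly independent. -/

import Mathlib

open Matrix BigOperators

/-- `F ∈ 𝓕_K`: real `M × K` matrix with entries in `[0,1]`. -/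
def memF {M K : ℕ} (F : Matrix (Fin M) (Fin K) ℝ) : Prop :=
  ∀ s k, 0 ≤ F s k ∧ F s k ≤ 1

/-- `Q ∈ 𝓠_K`: real `K × N` matrix with nonnegative entries whose columns sum to 1. -/
def memQ {K N : ℕ} (Q : Matrix (Fin K) (Fin N) ℝ) : Prop :=
  (∀ k i, 0 ≤ Q k i) ∧ ∀ i, ∑ k, Q k i = 1

/-- The standard basis vector `e_k` occurs as a column of `Q`. -/
def isColE {K N : ℕ} (Q : Matrix (Fin K) (Fin N) ℝ) (k : Fin K) : Prop :=
  ∃ i, ∀ l, Q l i = if l = k then (1 : ℝ) else 0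

/-- `Q ∈ 𝓠_K^an`: anchor condition on `Q`. -/
def memQan {K N : ℕ} (Q : Matrix (Fin K) (Fin N) ℝ) : Prop :=
  memQ Q ∧ ∀ k, isColE Q k

/-- The `K-1` column differences `F_{⋆1}−F_{⋆K}, …, F_{⋆(K−1)}−F_{⋆K}` are
linearly independent (stated for every proof of `0 < K`). -/
def colDiffIndep {M K : ℕ} (F : Matrix (Fin M) (Fin K) ℝ) : Prop :=
  ∀ hK : 0 < K, LinearIndependent ℝ (fun j : Fin (K - 1) =>
    (fun s => F s (Fin.castLE (Nat.sub_le K 1) j) - F s ⟨K - 1, Nat.sub_lt hK Nat.one_pos⟩ :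
      Fin M → ℝ))

/-- `F ∈ 𝓕_K^in`. -/
def memFin {M K : ℕ} (F : Matrix (Fin M) (Fin K) ℝ) : Prop :=
  memF F ∧ colDiffIndep F

/-- `F ∈ 𝓕_K^an`: anchor condition on `F`. -/
def memFan {M K : ℕ} (F : Matrix (Fin M) (Fin K) ℝ) : Prop :=
  memF F ∧ ∀ k, ∃ s, 0 < F s k ∧ ∀ l, l ≠ k → F s l = 0

/-- `Q ∈ 𝓠_K^in`: the rows of `Q` are linearly independent. -/
def memQin {K N : ℕ} (Q : Matrix (Fin K) (Fin N) ℝ) : Prop :=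
  memQ Q ∧ LinearIndependent ℝ (fun k : Fin K => Q k)

/-- `F ∈ 𝓕_K^d`: the columns of `F` are mutually distinct. -/
def memFd {M K : ℕ} (F : Matrix (Fin M) (Fin K) ℝ) : Prop :=
  memF F ∧ ∀ k l : Fin K, (∀ s, F s k = F s l) → k = l

/-- `Q ∈ 𝓠_K^ua`: every column of `Q` is a standard basis vector, and every
standard basis vector occurs as a column. -/
def memQua {K N : ℕ} (Q : Matrix (Fin K) (Fin N) ℝ) : Prop :=
  memQ Q ∧ (∀ i, ∃ k, ∀ l, Q l i = if l = k then (1 : ℝ) else 0) ∧ ∀ k, isColE Q k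

/-- `(F¹,Q¹) ∼ (F²,Q²)`: there is a bijection (permutation) `π` with
`F²_{⋆k} = F¹_{⋆π(k)}` and `Q²_{k⋆} = Q¹_{π(k)⋆}` for every `k`. -/
def MEquiv {M N K₁ K₂ : ℕ} (F1 : Matrix (Fin M) (Fin K₁) ℝ) (Q1 : Matrix (Fin K₁) (Fin N) ℝ)
    (F2 : Matrix (Fin M) (Fin K₂) ℝ) (Q2 : Matrix (Fin K₂) (Fin N) ℝ) : Prop :=
  ∃ π : Fin K₂ → Fin K₁, Function.Bijective π ∧
    (∀ k s, F2 s k = F1 s (π k)) ∧ (∀ k i, Q2 k i = Q1 (π k) i)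

/-- `co(F)`: convex hull of the columns of `F` in `ℝ^M`. -/
def coCols {M K : ℕ} (F : Matrix (Fin M) (Fin K) ℝ) : Set (Fin M → ℝ) :=
  convexHull ℝ {v | ∃ k, v = fun s => F s k}

/-- `cone(Q)`: all nonnegative linear combinations of the rows of `Q` in `ℝ^N`. -/
def coneRows {K N : ℕ} (Q : Matrix (Fin K) (Fin N) ℝ) : Set (Fin N → ℝ) :=
  {x | ∃ c : Fin K → ℝ, (∀ k, 0 ≤ c k) ∧ x = ∑ k, c k • Q k}

lemma row_mem_cone {K N : ℕ} (Q : Matrix (Fin K) (Fin N) ℝ) (k : Fin K) :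
    (Q k : Fin N → ℝ) ∈ coneRows Q := by
  refine ⟨fun l => if l = k then 1 else 0, fun l => by positivity, ?_⟩
  rw [Finset.sum_eq_single k (fun l _ h => by simp [h]) (by simp)]; simp

-- from linear independence: equal coefficient representations
lemma coeff_eq {K N : ℕ} {Q : Matrix (Fin K) (Fin N) ℝ}
    (li : LinearIndependent ℝ (fun k : Fin K => Q k)) {c d : Fin K → ℝ}
    (h : ∑ k, c k • Q k = ∑ k, d k • Q k) : c = d := by
  have h0 : ∑ k, (c k - d k) • Q k = 0 := by
    simp only [sub_smul, Finset.sum_sub_distrib, h, sub_self]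
  funext k
  have := (Fintype.linearIndependent_iff.mp li) (fun k => c k - d k) h0 k
  linarith

lemma perm_of_cones {K₁ K₂ N : ℕ} {Q1 : Matrix (Fin K₁) (Fin N) ℝ}
    {Q2 : Matrix (Fin K₂) (Fin N) ℝ}
    (hQ1 : ∀ i, ∑ k, Q1 k i = 1) (hQ2 : ∀ i, ∑ k, Q2 k i = 1)
    (li1 : LinearIndependent ℝ (fun k : Fin K₁ => Q1 k))
    (li2 : LinearIndependent ℝ (fun k : Fin K₂ => Q2 k))
    (hc : coneRows Q1 = coneRows Q2) :
    ∃ π : Fin K₂ → Fin K₁, Function.Bijective π ∧ ∀ k, (Q2 k : Fin N → ℝ) = Q1 (π k) := by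
  -- A : each row of Q2 as nonneg comb of rows of Q1
  have hA : ∀ k : Fin K₂, ∃ a : Fin K₁ → ℝ, (∀ l, 0 ≤ a l) ∧ (Q2 k : Fin N → ℝ) = ∑ l, a l • Q1 l := by
    intro k
    have : (Q2 k : Fin N → ℝ) ∈ coneRows Q1 := hc ▸ row_mem_cone Q2 k
    exact this
  have hB : ∀ l : Fin K₁, ∃ b : Fin K₂ → ℝ, (∀ m, 0 ≤ b m) ∧ (Q1 l : Fin N → ℝ) = ∑ m, b m • Q2 m := by
    intro l
    have : (Q1 l : Fin N → ℝ) ∈ coneRows Q2 := hc ▸ row_mem_cone Q1 l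
    exact this
  choose a ha0 haeq using hA
  choose b hb0 hbeq using hB
  -- AB = I
  have hAB : ∀ k m : Fin K₂, ∑ l, a k l * b l m = if m = k then 1 else 0 := by
    intro k m
    have h : ∑ m', (∑ l, a k l * b l m') • Q2 m' = ∑ m', (if m' = k then (1:ℝ) else 0) • Q2 m' := by
      have : (Q2 k : Fin N → ℝ) = ∑ m', (∑ l, a k l * b l m') • Q2 m' := by
        rw [haeq k]
        calc ∑ l, a k l • Q1 l = ∑ l, a k l • ∑ m', b l m' • Q2 m' := by
              simp_rw [← hbeq]
          _ = ∑ l, ∑ m', (a k l * b l m') • Q2 m' := by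
              simp_rw [Finset.smul_sum, smul_smul]
          _ = ∑ m', ∑ l, (a k l * b l m') • Q2 m' := Finset.sum_comm
          _ = ∑ m', (∑ l, a k l * b l m') • Q2 m' := by
              simp_rw [Finset.sum_smul]
      rw [← this]; rw [Finset.sum_eq_single k (fun l _ h => by simp [h]) (by simp)]; simp
    have hcd := coeff_eq li2 h
    have := congrFun hcd m
    simpa using this
  have hBA : ∀ l l' : Fin K₁, ∑ m, b l m * a m l' = if l' = l then 1 else 0 := by
    intro l l'
    have h : ∑ l'', (∑ m, b l m * a m l'') • Q1 l'' = ∑ l'', (if l'' = l then (1:ℝ) else 0) • Q1 l'' := by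
      have : (Q1 l : Fin N → ℝ) = ∑ l'', (∑ m, b l m * a m l'') • Q1 l'' := by
        rw [hbeq l]
        calc ∑ m, b l m • Q2 m = ∑ m, b l m • ∑ l'', a m l'' • Q1 l'' := by
              simp_rw [← haeq]
          _ = ∑ m, ∑ l'', (b l m * a m l'') • Q1 l'' := by
              simp_rw [Finset.smul_sum, smul_smul]
          _ = ∑ l'', ∑ m, (b l m * a m l'') • Q1 l'' := Finset.sum_comm
          _ = ∑ l'', (∑ m, b l m * a m l'') • Q1 l'' := by
              simp_rw [Finset.sum_smul]
      rw [← this]; rw [Finset.sum_eq_single l (fun l _ h => by simp [h]) (by simp)]; simp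
    have hcd := coeff_eq li1 h
    have := congrFun hcd l'
    simpa using this
  -- column claim : at most one positive entry per column of A
  have hcol : ∀ (l : Fin K₁) (k k' : Fin K₂), 0 < a k l → 0 < a k' l → k = k' := by
    intro l k k' hk hk'
    by_contra hne
    have hbz : ∀ m, b l m = 0 := by
      intro m
      rcases ne_or_eq m k with hmk | rfl
      · -- use (AB)_{k m} = 0
        have h0 : ∑ l', a k l' * b l' m = 0 := by rw [hAB]; simp [hmk]
        have : a k l * b l m = 0 := by
          have hnn : ∀ l' ∈ Finset.univ, 0 ≤ a k l' * b l' m :=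
            fun l' _ => mul_nonneg (ha0 _ _) (hb0 _ _)
          have := (Finset.sum_eq_zero_iff_of_nonneg hnn).mp h0 l (Finset.mem_univ l)
          exact this
        rcases mul_eq_zero.mp this with h | h
        · exact absurd h hk.ne'
        · exact h
      · -- m = k, use (AB)_{k' k} = 0
        have h0 : ∑ l', a k' l' * b l' m = 0 := by rw [hAB]; simp [hne]
        have : a k' l * b l m = 0 := by
          have hnn : ∀ l' ∈ Finset.univ, 0 ≤ a k' l' * b l' m :=
            fun l' _ => mul_nonneg (ha0 _ _) (hb0 _ _)
          exact (Finset.sum_eq_zero_iff_of_nonneg hnn).mp h0 l (Finset.mem_univ l)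
        rcases mul_eq_zero.mp this with h | h
        · exact absurd h hk'.ne'
        · exact h
    have h1 : ∑ m, b l m * a m l = 1 := by rw [hBA]; simp
    simp [hbz] at h1
  -- each row of A has a positive entry
  have hrow : ∀ k : Fin K₂, ∃ l, 0 < a k l := by
    intro k
    by_contra h
    push_neg at h
    have hz : ∀ l, a k l = 0 := fun l => le_antisymm (h l) (ha0 k l)
    have h1 : ∑ l, a k l * b l k = 1 := by rw [hAB]; simp
    simp [hz] at h1
  -- similarly for B
  have hcolB : ∀ (m : Fin K₂) (l l' : Fin K₁), 0 < b l m → 0 < b l' m → l = l' := by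
    intro m l l' hl hl'
    by_contra hne
    have haz : ∀ k, a m k = 0 := by
      intro k
      rcases ne_or_eq k l with hkl | rfl
      · have h0 : ∑ m', b l m' * a m' k = 0 := by rw [hBA]; simp [hkl]
        have : b l m * a m k = 0 := by
          have hnn : ∀ m' ∈ Finset.univ, 0 ≤ b l m' * a m' k :=
            fun m' _ => mul_nonneg (hb0 _ _) (ha0 _ _)
          exact (Finset.sum_eq_zero_iff_of_nonneg hnn).mp h0 m (Finset.mem_univ m)
        rcases mul_eq_zero.mp this with h | h
        · exact absurd h hl.ne'
        · exact h
      · have h0 : ∑ m', b l' m' * a m' k = 0 := by rw [hBA]; simp [hne]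
        have : b l' m * a m k = 0 := by
          have hnn : ∀ m' ∈ Finset.univ, 0 ≤ b l' m' * a m' k :=
            fun m' _ => mul_nonneg (hb0 _ _) (ha0 _ _)
          exact (Finset.sum_eq_zero_iff_of_nonneg hnn).mp h0 m (Finset.mem_univ m)
        rcases mul_eq_zero.mp this with h | h
        · exact absurd h hl'.ne'
        · exact h
    have h1 : ∑ l'', a m l'' * b l'' m = 1 := by rw [hAB]; simp
    simp [haz] at h1
  have hrowB : ∀ l : Fin K₁, ∃ m, 0 < b l m := by
    intro l
    by_contra h
    push_neg at h
    have hz : ∀ m, b l m = 0 := fun m => le_antisymm (h m) (hb0 l m)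
    have h1 : ∑ m, b l m * a m l = 1 := by rw [hBA]; simp
    simp [hz] at h1
  choose π hπ using hrow
  choose ρ hρ using hrowB
  have hπinj : Function.Injective π := fun k k' h => hcol _ _ _ (hπ k) (h ▸ hπ k')
  have hρinj : Function.Injective ρ := fun l l' h => hcolB _ _ _ (hρ l) (h ▸ hρ l')
  have hKle : K₂ ≤ K₁ := by
    have := Fintype.card_le_of_injective π hπinj; simpa using this
  have hKle' : K₁ ≤ K₂ := by
    have := Fintype.card_le_of_injective ρ hρinj; simpa using this
  have hbij : Function.Bijective π := by
    rw [Fintype.bijective_iff_injective_and_card]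
    exact ⟨hπinj, by simp [le_antisymm hKle hKle']⟩
  -- each row of A has support exactly {π k}
  have hsingle : ∀ k l, l ≠ π k → a k l = 0 := by
    intro k l hne
    by_contra hz
    have hpos : 0 < a k l := lt_of_le_of_ne (ha0 k l) (Ne.symm hz)
    obtain ⟨k'', hk''⟩ := hbij.surjective l
    have hpos'' : 0 < a k'' l := by rw [← hk'']; exact hπ k''
    have hkk : k'' = k := hcol l k'' k hpos'' hpos
    rw [← hkk] at hne
    exact hne hk''.symm
  -- Q2 k = a k (π k) • Q1 (π k)
  have hQ2eq : ∀ k, (Q2 k : Fin N → ℝ) = a k (π k) • Q1 (π k) := by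
    intro k
    rw [haeq k]
    rw [Finset.sum_eq_single (π k)]
    · intro l _ hne; rw [hsingle k l hne, zero_smul]
    · intro h; exact absurd (Finset.mem_univ _) h
  -- column sums force a k (π k) = 1
  set e : Fin K₂ ≃ Fin K₁ := Equiv.ofBijective π hbij with he
  have hsum : ∑ k, (a k (π k)) • Q1 (π k) = ∑ k, (1:ℝ) • Q1 (π k) := by
    funext i
    have h2 : ∑ k, (a k (π k) • Q1 (π k)) i = 1 := by
      have := hQ2 i
      simp_rw [← this]
      exact Finset.sum_congr rfl fun k _ => by rw [← hQ2eq k]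
    have h1 : ∑ k, ((1:ℝ) • Q1 (π k)) i = 1 := by
      simp only [one_smul]
      rw [← hQ1 i]
      exact Fintype.sum_equiv e _ _ (fun k => rfl)
    simp only [Finset.sum_apply]
    rw [h2, h1]
  have hc1 : ∀ k, a k (π k) = 1 := by
    have hre : ∀ c : Fin K₂ → ℝ, ∑ k, c k • Q1 (π k) = ∑ l, c (e.symm l) • Q1 l := by
      intro c
      rw [← Equiv.sum_comp e (fun l => c (e.symm l) • Q1 l)]
      refine Finset.sum_congr rfl fun k _ => ?_
      rw [Equiv.symm_apply_apply]
      rfl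
    have := coeff_eq li1 ((hre _).symm.trans (hsum.trans (hre _)))
    intro k
    have := congrFun this (e k)
    simpa using this
  exact ⟨π, hbij, fun k => by rw [hQ2eq k, hc1 k, one_smul]⟩


/-- A model is identifiable if equality of the products implies equivalence. -/
def Identifiable {M N : ℕ}
    (𝓜 : ∀ K : ℕ, Set (Matrix (Fin M) (Fin K) ℝ × Matrix (Fin K) (Fin N) ℝ)) : Prop :=
  ∀ (K₁ K₂ : ℕ) (F1 : Matrix (Fin M) (Fin K₁) ℝ) (Q1 : Matrix (Fin K₁) (Fin N) ℝ)
    (F2 : Matrix (Fin M) (Fin K₂) ℝ) (Q2 : Matrix (Fin K₂) (Fin N) ℝ),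
    (F1, Q1) ∈ 𝓜 K₁ → (F2, Q2) ∈ 𝓜 K₂ → F1 * Q1 = F2 * Q2 → MEquiv F1 Q1 F2 Q2

/-- The set of indices `k` such that some row of `F` equals `δ_k · e_kᵀ` with `δ_k > 0`. -/
def anchorRows {M K : ℕ} (F : Matrix (Fin M) (Fin K) ℝ) : Set (Fin K) :=
  {k | ∃ (s : Fin M) (d : ℝ), 0 < d ∧ ∀ l, F s l = if l = k then d else 0}


lemma sum_reindex {K₁ K₂ N : ℕ} (e : Fin K₂ ≃ Fin K₁) (c : Fin K₂ → ℝ)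
    (v : Fin K₁ → Fin N → ℝ) :
    ∑ k, c k • v (e k) = ∑ l, c (e.symm l) • v l := by
  rw [← Equiv.sum_comp e (fun l => c (e.symm l) • v l)]
  exact Finset.sum_congr rfl fun k _ => by rw [Equiv.symm_apply_apply]

lemma cone_eq_of_perm {K₁ K₂ N : ℕ} (Q1 : Matrix (Fin K₁) (Fin N) ℝ)
    (Q2 : Matrix (Fin K₂) (Fin N) ℝ) (π : Fin K₂ → Fin K₁) (hbij : Function.Bijective π)
    (hQ : ∀ k i, Q2 k i = Q1 (π k) i) : coneRows Q1 = coneRows Q2 := by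
  have hQ' : ∀ k, (Q2 k : Fin N → ℝ) = Q1 (π k) := fun k => funext (hQ k)
  set e := Equiv.ofBijective π hbij with he
  have heapp : ∀ k, e k = π k := fun k => rfl
  ext x
  constructor
  · rintro ⟨c, hc0, rfl⟩
    refine ⟨fun k => c (π k), fun k => hc0 _, ?_⟩
    have : ∑ k, c (π k) • Q2 k = ∑ k, c (e k) • Q1 (e k) :=
      Finset.sum_congr rfl fun k _ => by rw [hQ' k, heapp]
    rw [this, Equiv.sum_comp e (fun l => c l • Q1 l)]
  · rintro ⟨c, hc0, rfl⟩
    refine ⟨fun l => c (e.symm l), fun l => hc0 _, ?_⟩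
    have : ∑ k, c k • Q2 k = ∑ k, c k • Q1 (e k) :=
      Finset.sum_congr rfl fun k _ => by rw [hQ' k, heapp]
    rw [this, sum_reindex e c Q1]


/-- characterisation of identifiability for models closed under
replacing `F` by any element of `𝓕_{K(F)}^an`, with `K(F) < M`. -/
theorem stmt8 {M N : ℕ} (hM : 1 ≤ M) (hN : 1 ≤ N)
    (𝓜 : ∀ K : ℕ, Set (Matrix (Fin M) (Fin K) ℝ × Matrix (Fin K) (Fin N) ℝ))
    (hmem : ∀ (K : ℕ) (F : Matrix (Fin M) (Fin K) ℝ) (Q : Matrix (Fin K) (Fin N) ℝ),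
      (F, Q) ∈ 𝓜 K → 1 ≤ K ∧ memF F ∧ memQ Q)
    (h1 : ∀ (K : ℕ) (F : Matrix (Fin M) (Fin K) ℝ) (Q : Matrix (Fin K) (Fin N) ℝ),
      (F, Q) ∈ 𝓜 K → K < M)
    (h2 : ∀ (K : ℕ) (F : Matrix (Fin M) (Fin K) ℝ) (Q : Matrix (Fin K) (Fin N) ℝ),
      (F, Q) ∈ 𝓜 K → ∀ F' : Matrix (Fin M) (Fin K) ℝ, memFan F' → (F', Q) ∈ 𝓜 K) :
    Identifiable 𝓜 ↔
      ((∀ (K₁ K₂ : ℕ) (F1 : Matrix (Fin M) (Fin K₁) ℝ) (Q1 : Matrix (Fin K₁) (Fin N) ℝ)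
          (F2 : Matrix (Fin M) (Fin K₂) ℝ) (Q2 : Matrix (Fin K₂) (Fin N) ℝ),
          (F1, Q1) ∈ 𝓜 K₁ → (F2, Q2) ∈ 𝓜 K₂ → F1 * Q1 = F2 * Q2 →
          coneRows Q1 = coneRows Q2) ∧
        (∀ (K : ℕ) (F : Matrix (Fin M) (Fin K) ℝ) (Q : Matrix (Fin K) (Fin N) ℝ),
          (F, Q) ∈ 𝓜 K → LinearIndependent ℝ (fun k : Fin K => Q k))) := by
  constructor
  · -- Identifiable → (cone equality) ∧ (lin indep rows)
    intro hid
    constructor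
    · intro K₁ K₂ F1 Q1 F2 Q2 hm1 hm2 heq
      obtain ⟨π, hbij, _, hQ⟩ := hid K₁ K₂ F1 Q1 F2 Q2 hm1 hm2 heq
      exact cone_eq_of_perm Q1 Q2 π hbij hQ
    · intro K F Q hFQ
      by_contra hnli
      obtain ⟨hK1, hmF, hmQ⟩ := hmem K F Q hFQ
      have hKM := h1 K F Q hFQ
      rw [Fintype.not_linearIndependent_iff] at hnli
      obtain ⟨c, hc0, k₀, hk₀⟩ := hnli
      set S : ℝ := ∑ k, |c k| with hS
      have hS0 : 0 ≤ S := Finset.sum_nonneg fun k _ => abs_nonneg _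
      set t : ℝ := (1 + S)⁻¹ with ht
      have ht0 : 0 < t := by positivity
      have habs : ∀ k, |c k| ≤ S :=
        fun k => Finset.single_le_sum (f := fun k => |c k|) (fun k _ => abs_nonneg _)
          (Finset.mem_univ k)
      have hent : ∀ x : ℝ, |x| ≤ S → t * max x 0 ≤ 1 := by
        intro x hx
        have h1 : max x 0 ≤ 1 + S := by
          rcases le_total x 0 with h | h
          · simp [max_eq_right h]; positivity
          · rw [max_eq_left h]
            calc x ≤ |x| := le_abs_self x
              _ ≤ S := hx
              _ ≤ 1 + S := by linarith
        calc t * max x 0 ≤ t * (1 + S) := by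
              exact mul_le_mul_of_nonneg_left h1 ht0.le
          _ = 1 := by rw [ht]; field_simp
      -- the two anchored matrices
      set F' : Matrix (Fin M) (Fin K) ℝ := fun s k =>
        if (s : ℕ) = M - 1 then t * max (c k) 0 else (if (s : ℕ) = (k : ℕ) then 1 else 0)
        with hF'
      set F'' : Matrix (Fin M) (Fin K) ℝ := fun s k =>
        if (s : ℕ) = M - 1 then t * max (-(c k)) 0 else (if (s : ℕ) = (k : ℕ) then 1 else 0)
        with hF''
      have hKM1 : K ≤ M - 1 := by omega
      have hF'app : ∀ (s : Fin M) (k : Fin K), F' s k =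
          if (s : ℕ) = M - 1 then t * max (c k) 0 else
            (if (s : ℕ) = (k : ℕ) then 1 else 0) := fun s k => rfl
      have hF''app : ∀ (s : Fin M) (k : Fin K), F'' s k =
          if (s : ℕ) = M - 1 then t * max (-(c k)) 0 else
            (if (s : ℕ) = (k : ℕ) then 1 else 0) := fun s k => rfl
      have hanch : ∀ (G : Matrix (Fin M) (Fin K) ℝ),
          (∀ (s : Fin M) (k : Fin K), (s : ℕ) ≠ M - 1 →
            G s k = if (s : ℕ) = (k : ℕ) then 1 else 0) →
          (∀ (s : Fin M) (k : Fin K), (s : ℕ) = M - 1 → 0 ≤ G s k ∧ G s k ≤ 1) →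
          memFan G := by
        intro G hGa hGl
        constructor
        · intro s k
          rcases eq_or_ne (s : ℕ) (M - 1) with h | h
          · exact hGl s k h
          · rw [hGa s k h]
            split <;> norm_num
        · intro k
          have hkM : (k : ℕ) < M - 1 := lt_of_lt_of_le k.isLt hKM1
          have hsM : (k : ℕ) < M := by omega
          refine ⟨⟨(k : ℕ), hsM⟩, ?_, ?_⟩
          · have hsne : ((⟨(k : ℕ), hsM⟩ : Fin M) : ℕ) ≠ M - 1 := by
              simp only [Fin.val_mk]; omega
            rw [hGa _ k hsne]
            simp
          · intro l hl
            have hsne : ((⟨(k : ℕ), hsM⟩ : Fin M) : ℕ) ≠ M - 1 := by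
              simp only [Fin.val_mk]; omega
            rw [hGa _ l hsne]
            have : (k : ℕ) ≠ (l : ℕ) := fun h => hl (Fin.ext h.symm)
            simp [this]
      have hmF' : memFan F' := by
        refine hanch F' (fun s k h => by simp [hF', h]) (fun s k h => ?_)
        simp only [hF', h, if_true]
        constructor
        · positivity
        · exact hent _ (habs k)
      have hmF'' : memFan F'' := by
        refine hanch F'' (fun s k h => by simp [hF'', h]) (fun s k h => ?_)
        simp only [hF'', h, if_true]
        constructor
        · positivity
        · exact hent _ (by rw [abs_neg]; exact habs k)
      have hmem' := h2 K F Q hFQ F' hmF'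
      have hmem'' := h2 K F Q hFQ F'' hmF''
      have hprod : F' * Q = F'' * Q := by
        ext s i
        simp only [Matrix.mul_apply]
        rcases eq_or_ne (s : ℕ) (M - 1) with h | h
        · have hci : ∑ k, c k * Q k i = 0 := by
            have := congrFun hc0 i
            simpa [Finset.sum_apply] using this
          have : ∑ k, F' s k * Q k i - ∑ k, F'' s k * Q k i = 0 := by
            rw [← Finset.sum_sub_distrib]
            have : ∀ k, F' s k * Q k i - F'' s k * Q k i = t * (c k * Q k i) := by
              intro k
              have hmx : max (c k) 0 - max (-(c k)) 0 = c k :=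
                max_zero_sub_max_neg_zero_eq_self (c k)
              rw [hF'app, hF''app, if_pos h, if_pos h]
              linear_combination (t * Q k i) * hmx
            rw [Finset.sum_congr rfl fun k _ => this k, ← Finset.mul_sum, hci, mul_zero]
          linarith
        · exact Finset.sum_congr rfl fun k _ => by
            rw [hF'app, hF''app, if_neg h, if_neg h]
      obtain ⟨π, hbij, hFeq, _⟩ := hid K K F' Q F'' Q hmem' hmem'' hprod
      have hπ : ∀ k, π k = k := by
        intro k
        have hkM : (k : ℕ) < M - 1 := lt_of_lt_of_le k.isLt hKM1
        have hsM : (k : ℕ) < M := by omega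
        have hsne : ((⟨(k : ℕ), hsM⟩ : Fin M) : ℕ) ≠ M - 1 := by
          simp only [Fin.val_mk]; omega
        by_contra hne
        have h1' := hFeq k ⟨(k : ℕ), hsM⟩
        rw [hF''app, hF'app, if_neg hsne, if_neg hsne, if_pos rfl] at h1'
        have hne' : ((⟨(k : ℕ), hsM⟩ : Fin M) : ℕ) ≠ ((π k) : ℕ) := by
          simp only [Fin.val_mk]
          exact fun h => hne (Fin.ext h.symm)
        rw [if_neg hne'] at h1'
        norm_num at h1'
      have hc0' : ∀ k, c k = 0 := by
        intro k
        have hMlt : M - 1 < M := by omega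
        have h1' := hFeq k ⟨M - 1, hMlt⟩
        rw [hF''app, hF'app, if_pos rfl, if_pos rfl, hπ k] at h1'
        have : max (-(c k)) 0 = max (c k) 0 := mul_left_cancel₀ ht0.ne' h1'
        have hmx : max (c k) 0 - max (-(c k)) 0 = c k :=
          max_zero_sub_max_neg_zero_eq_self (c k)
        linarith
      exact hk₀ (hc0' k₀)
  · -- converse
    rintro ⟨hcone, hli⟩
    intro K₁ K₂ F1 Q1 F2 Q2 hm1 hm2 heq
    obtain ⟨_, _, hmQ1⟩ := hmem K₁ F1 Q1 hm1
    obtain ⟨_, _, hmQ2⟩ := hmem K₂ F2 Q2 hm2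
    obtain ⟨π, hbij, hQeq⟩ := perm_of_cones hmQ1.2 hmQ2.2 (hli K₁ F1 Q1 hm1)
      (hli K₂ F2 Q2 hm2) (hcone K₁ K₂ F1 Q1 F2 Q2 hm1 hm2 heq)
    refine ⟨π, hbij, ?_, fun k i => by rw [hQeq k]⟩
    set e := Equiv.ofBijective π hbij with he
    have heapp : ∀ k, e k = π k := fun k => rfl
    intro k s
    have hv : ∑ l, F1 s l • Q1 l = ∑ m, F2 s m • Q2 m := by
      funext i
      have h := congrFun (congrFun heq s) i
      simp only [Matrix.mul_apply] at h
      simpa [Finset.sum_apply] using h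
    have hv2 : ∑ m, F2 s m • Q2 m = ∑ l, F2 s (e.symm l) • Q1 l := by
      rw [Finset.sum_congr rfl fun m _ => by rw [hQeq m, ← heapp m]]
      exact sum_reindex e (fun m => F2 s m) Q1
    have hcc := coeff_eq (hli K₁ F1 Q1 hm1) (hv.trans hv2)
    have := congrFun hcc (π k)
    rw [this, ← heapp, Equiv.symm_apply_apply]
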